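/- Let ℓ > 0, c ∈ [0,1), Y = (2π/ℓ)arcsin(c), and ρ_ℓ(s) = (ℓ/(2π))(cos((ℓ/(2π))s))^{-1}. For any w ∈ C^1([0,Y] × S^1, ℝ), c · ρ_ℓ(Y) ∫_{S^1} |w(Y,θ)| dθ ≤ ∫_0^Y ∫_{S^1} |w| ρ_ℓ(s)² dθ ds + c ∫_0^Y ∫_{S^1} |∂_s w| ρ_ℓ(s) dθ ds. -/

import Mathlib

open Real MeasureTheory intervalIntegral Set


lemma key_oneD (k Y c : ℝ) (hk0 : 0 < k) (hY0 : 0 ≤ Y) (hkY : k * Y < π / 2)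
    (hsin : Real.sin (k * Y) = c)
    (ρ : ℝ → ℝ) (hρ : ∀ s ∈ Icc 0 Y, ρ s = k * (Real.cos (k * s))⁻¹) (hρc : Continuous ρ)
    (u du : ℝ → ℝ) (hu : ∀ s, HasDerivAt u (du s) s) (hduc : Continuous du) :
    c * ρ Y * |u Y| ≤ (∫ s in (0:ℝ)..Y, |u s| * ρ s ^ 2) + c * ∫ s in (0:ℝ)..Y, |du s| * ρ s := by
  have hc0 : 0 ≤ c := by
    rw [← hsin]
    exact Real.sin_nonneg_of_nonneg_of_le_pi (by positivity) (by nlinarith [Real.pi_pos])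
  have hmem : ∀ s ∈ Icc (0:ℝ) Y, 0 ≤ k * s ∧ k * s < π / 2 := by
    intro s hs
    constructor
    · exact mul_nonneg hk0.le hs.1
    · exact lt_of_le_of_lt (by nlinarith [hs.2]) hkY
  have hcos : ∀ s ∈ Icc (0:ℝ) Y, 0 < Real.cos (k * s) := by
    intro s hs
    obtain ⟨h1, h2⟩ := hmem s hs
    exact Real.cos_pos_of_mem_Ioo ⟨by linarith [Real.pi_pos], h2⟩
  have hρnn : ∀ s ∈ Icc (0:ℝ) Y, 0 ≤ ρ s := by
    intro s hs
    rw [hρ s hs]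
    exact mul_nonneg hk0.le (inv_nonneg.2 (hcos s hs).le)
  set A : ℝ → ℝ := fun s => k * Real.tan (k * s) with hA_def
  have hA : ∀ s ∈ Icc (0:ℝ) Y, HasDerivAt A (ρ s ^ 2) s := by
    intro s hs
    have hcs := (hcos s hs).ne'
    have h1 : HasDerivAt (fun x : ℝ => k * x) k s := by
      simpa using (hasDerivAt_id s).const_mul k
    have h2 := (Real.hasDerivAt_tan hcs).comp s h1
    have h3 := h2.const_mul k
    refine h3.congr_deriv ?_
    rw [hρ s hs]
    field_simp
  have hAcont : ContinuousOn A (Icc 0 Y) := by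
    apply continuousOn_const.mul
    intro x hx
    exact ((Real.continuousAt_tan.2 (hcos x hx).ne').comp
      ((continuous_const.mul continuous_id).continuousAt)).continuousWithinAt
  set H : ℝ → ℝ := fun s => ∫ t in s..Y, |du t| with hH_def
  have habs_cont : Continuous fun t => |du t| := hduc.abs
  have hint_abs : ∀ a b : ℝ, IntervalIntegrable (fun t => |du t|) volume a b :=
    fun a b => habs_cont.intervalIntegrable a b
  have hH : ∀ s, HasDerivAt H (-(|du s|)) s := by
    intro s
    exact intervalIntegral.integral_hasDerivAt_left (hint_abs s Y)
      habs_cont.stronglyMeasurable.stronglyMeasurableAtFilter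
      habs_cont.continuousAt
  have hHcont : Continuous H := continuous_iff_continuousAt.2 fun s => (hH s).continuousAt
  -- FTC inequality
  have step1 : ∀ s ∈ Icc (0:ℝ) Y, |u Y| ≤ |u s| + H s := by
    intro s hs
    have hftc : ∫ t in s..Y, du t = u Y - u s :=
      intervalIntegral.integral_eq_sub_of_hasDerivAt (fun t _ => hu t)
        (hduc.intervalIntegrable s Y)
    have h1 : |u Y| ≤ |u s| + |∫ t in s..Y, du t| := by
      have : u Y = u s + ∫ t in s..Y, du t := by rw [hftc]; ring
      rw [this]
      exact abs_add_le _ _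
    have h2 : |∫ t in s..Y, du t| ≤ H s := by
      have := intervalIntegral.abs_integral_le_integral_abs (f := du) (μ := volume) hs.2
      simpa [hH_def] using this
    calc |u Y| ≤ |u s| + |∫ t in s..Y, du t| := h1
      _ ≤ |u s| + H s := by linarith
  have hderiv_eq : ∀ t ∈ Icc (0:ℝ) Y, deriv u t = du t := fun t _ => (hu t).deriv
  -- integration by parts
  have hGderiv : ∀ s ∈ uIcc (0:ℝ) Y,
      HasDerivAt (fun s => A s * H s) (ρ s ^ 2 * H s - A s * |du s|) s := by
    intro s hs
    rw [uIcc_of_le hY0] at hs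
    have := (hA s hs).mul (hH s)
    exact this.congr_deriv (by ring)
  have hint1 : IntervalIntegrable (fun s => ρ s ^ 2 * H s) volume 0 Y :=
    ((hρc.pow 2).mul hHcont).intervalIntegrable 0 Y
  have hint2 : IntervalIntegrable (fun s => A s * |du s|) volume 0 Y := by
    apply ContinuousOn.intervalIntegrable
    rw [uIcc_of_le hY0]
    exact hAcont.mul habs_cont.continuousOn
  have hIBP : (∫ s in (0:ℝ)..Y, ρ s ^ 2 * H s) = ∫ s in (0:ℝ)..Y, A s * |du s| := by
    have h0 : (∫ s in (0:ℝ)..Y, (ρ s ^ 2 * H s - A s * |du s|))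
        = A Y * H Y - A 0 * H 0 :=
      intervalIntegral.integral_eq_sub_of_hasDerivAt hGderiv (hint1.sub hint2)
    have hHY : H Y = 0 := by simp [hH_def]
    have hA0 : A 0 = 0 := by simp [hA_def]
    rw [intervalIntegral.integral_sub hint1 hint2, hHY, hA0] at h0
    linarith [h0]
  -- value of ∫ ρ²
  have hrho2 : (∫ s in (0:ℝ)..Y, ρ s ^ 2) = c * ρ Y := by
    have h0 : (∫ s in (0:ℝ)..Y, ρ s ^ 2) = A Y - A 0 :=
      intervalIntegral.integral_eq_sub_of_hasDerivAt
        (fun s hs => hA s (by rwa [uIcc_of_le hY0] at hs))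
        ((hρc.pow 2).intervalIntegrable 0 Y)
    have hA0 : A 0 = 0 := by simp [hA_def]
    have hcY : 0 < Real.cos (k * Y) := hcos Y ⟨hY0, le_refl Y⟩
    rw [h0, hA0, sub_zero, hρ Y ⟨hY0, le_refl Y⟩]
    show k * Real.tan (k * Y) = c * (k * (Real.cos (k * Y))⁻¹)
    rw [Real.tan_eq_sin_div_cos, hsin]
    field_simp
  -- A s ≤ c * ρ s on the interval
  have hAle : ∀ s ∈ Icc (0:ℝ) Y, A s ≤ c * ρ s := by
    intro s hs
    obtain ⟨h1, h2⟩ := hmem s hs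
    have hsle : Real.sin (k * s) ≤ c := by
      rw [← hsin]
      apply Real.strictMonoOn_sin.monotoneOn
      · constructor <;> [linarith [Real.pi_pos]; linarith]
      · constructor
        · have := mul_nonneg hk0.le hY0; linarith [Real.pi_pos]
        · linarith
      · nlinarith [hs.2]
    have hcs := hcos s hs
    have : A s = Real.sin (k * s) * ρ s := by
      rw [hρ s hs]
      show k * Real.tan (k * s) = Real.sin (k * s) * (k * (Real.cos (k * s))⁻¹)
      rw [Real.tan_eq_sin_div_cos]
      field_simp
    rw [this]
    exact mul_le_mul_of_nonneg_right hsle (hρnn s hs)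
  -- chain of inequalities
  have hucont : Continuous u := continuous_iff_continuousAt.2 fun s => (hu s).continuousAt
  have hintW : IntervalIntegrable (fun s => |u s| * ρ s ^ 2) volume 0 Y :=
    (hucont.abs.mul (hρc.pow 2)).intervalIntegrable 0 Y
  have hintC : IntervalIntegrable (fun s => ρ s ^ 2 * |u Y|) volume 0 Y :=
    ((hρc.pow 2).mul continuous_const).intervalIntegrable 0 Y
  have hintR : IntervalIntegrable (fun s => |u s| * ρ s ^ 2 + ρ s ^ 2 * H s) volume 0 Y :=
    hintW.add hint1
  have hint3 : IntervalIntegrable (fun s => c * (|du s| * ρ s)) volume 0 Y :=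
    (continuous_const.mul (habs_cont.mul hρc)).intervalIntegrable 0 Y
  have e1 : (∫ s in (0:ℝ)..Y, ρ s ^ 2 * |u Y|) = c * ρ Y * |u Y| := by
    rw [intervalIntegral.integral_mul_const, hrho2]
  rw [← e1]
  calc (∫ s in (0:ℝ)..Y, ρ s ^ 2 * |u Y|)
      ≤ ∫ s in (0:ℝ)..Y, (|u s| * ρ s ^ 2 + ρ s ^ 2 * H s) := by
        apply intervalIntegral.integral_mono_on hY0 hintC hintR
        intro s hs
        nlinarith [step1 s hs, sq_nonneg (ρ s)]
    _ = (∫ s in (0:ℝ)..Y, |u s| * ρ s ^ 2) + ∫ s in (0:ℝ)..Y, ρ s ^ 2 * H s :=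
        intervalIntegral.integral_add hintW hint1
    _ = (∫ s in (0:ℝ)..Y, |u s| * ρ s ^ 2) + ∫ s in (0:ℝ)..Y, A s * |du s| := by rw [hIBP]
    _ ≤ (∫ s in (0:ℝ)..Y, |u s| * ρ s ^ 2) + ∫ s in (0:ℝ)..Y, c * (|du s| * ρ s) := by
        apply add_le_add le_rfl
        apply intervalIntegral.integral_mono_on hY0 hint2 hint3
        intro s hs
        have h := mul_le_mul_of_nonneg_right (hAle s hs) (abs_nonneg (du s))
        calc A s * |du s| ≤ c * ρ s * |du s| := h
          _ = c * (|du s| * ρ s) := by ring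
    _ = (∫ s in (0:ℝ)..Y, |u s| * ρ s ^ 2) + c * ∫ s in (0:ℝ)..Y, |du s| * ρ s := by
        rw [intervalIntegral.integral_const_mul]

lemma swapRect (f : ℝ → ℝ → ℝ) {a b c d : ℝ} (hab : a ≤ b) (hcd : c ≤ d)
    (hf : Continuous (Function.uncurry f)) :
    (∫ x in a..b, ∫ y in c..d, f x y) = ∫ y in c..d, ∫ x in a..b, f x y := by
  simp_rw [intervalIntegral.integral_of_le hab, intervalIntegral.integral_of_le hcd]
  apply MeasureTheory.integral_integral_swap
  rw [Measure.prod_restrict]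
  exact ((hf.continuousOn.integrableOn_compact (isCompact_Icc.prod isCompact_Icc)).mono_set
    (Set.prod_mono Set.Ioc_subset_Icc_self Set.Ioc_subset_Icc_self))

/-- The conformal factor of the hyperbolic collar metric around a geodesic of length `ℓ`. -/
noncomputable def collarRho (ℓ s : ℝ) : ℝ := ℓ / (2 * π) * (Real.cos (ℓ / (2 * π) * s))⁻¹

/-- half-collar trace estimate in collar coordinates: for the metric
`ρ_ℓ(s)²(ds²+dθ²)` on `[0,Y] × S¹`, `Y = (2π/ℓ) arcsin c`, and any `C¹` function `w`,
`c ρ_ℓ(Y) ∫_{S¹} |w(Y,θ)| dθ ≤ ∫∫ |w| ρ_ℓ² + c ∫∫ |∂_s w| ρ_ℓ`. -/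
theorem half_collar_trace_estimate
    (ℓ c : ℝ) (hℓ : 0 < ℓ) (hc0 : 0 ≤ c) (hc1 : c < 1)
    (Y : ℝ) (hY : Y = 2 * π / ℓ * Real.arcsin c)
    (w : ℝ → ℝ → ℝ) (hw : ContDiff ℝ 1 (Function.uncurry w))
    (hper : ∀ s θ, w s (θ + 2 * π) = w s θ) :
    c * collarRho ℓ Y * ∫ θ in (0:ℝ)..(2 * π), |w Y θ|
      ≤ (∫ s in (0:ℝ)..Y, ∫ θ in (0:ℝ)..(2 * π), |w s θ| * (collarRho ℓ s) ^ 2)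
        + c * ∫ s in (0:ℝ)..Y, ∫ θ in (0:ℝ)..(2 * π),
            |deriv (fun t => w t θ) s| * collarRho ℓ s := by
  have hπ := Real.pi_pos
  set k : ℝ := ℓ / (2 * π) with hk_def
  have hk0 : 0 < k := by positivity
  have hc1' : -1 ≤ c := by linarith
  have hkY : k * Y = Real.arcsin c := by
    rw [hY, hk_def]; field_simp
  have hY0 : 0 ≤ Y := by
    rw [hY]
    exact mul_nonneg (by positivity) (Real.arcsin_nonneg.2 hc0)
  have harc_lt : k * Y < π / 2 := by
    rw [hkY]; exact Real.arcsin_lt_pi_div_two.2 hc1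
  have hsin : Real.sin (k * Y) = c := by rw [hkY]; exact Real.sin_arcsin hc1' hc1.le
  -- cosine bounds on [0, Y]
  set m : ℝ := Real.cos (k * Y) with hm_def
  have hm0 : 0 < m := Real.cos_pos_of_mem_Ioo ⟨by nlinarith [mul_nonneg hk0.le hY0], harc_lt⟩
  have hcosge : ∀ s ∈ Icc (0:ℝ) Y, m ≤ Real.cos (k * s) := by
    intro s hs
    apply Real.cos_le_cos_of_nonneg_of_le_pi (mul_nonneg hk0.le hs.1)
    · nlinarith
    · nlinarith [hs.2]
  -- globally continuous surrogate for collarRho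
  set ρ : ℝ → ℝ := fun s => k * (max (Real.cos (k * s)) m)⁻¹ with hρ_def
  have hρc : Continuous ρ := by
    apply continuous_const.mul
    apply Continuous.inv₀
    · exact (Real.continuous_cos.comp (continuous_const.mul continuous_id)).max continuous_const
    · intro s
      exact ne_of_gt (lt_of_lt_of_le hm0 (le_max_right _ _))
  have hρeq : ∀ s ∈ Icc (0:ℝ) Y, ρ s = k * (Real.cos (k * s))⁻¹ := by
    intro s hs
    simp only [hρ_def, max_eq_left (hcosge s hs)]
  have hρcollar : ∀ s ∈ Icc (0:ℝ) Y, collarRho ℓ s = ρ s := by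
    intro s hs
    rw [hρeq s hs, collarRho]
  -- the derivative function
  set D : ℝ → ℝ → ℝ := fun s θ => deriv (fun t => w t θ) s with hD_def
  have hwd : Differentiable ℝ (Function.uncurry w) := hw.differentiable one_ne_zero
  have hDderiv : ∀ s θ, HasDerivAt (fun t => w t θ)
      (fderiv ℝ (Function.uncurry w) (s, θ) (1, 0)) s := by
    intro s θ
    have h1 : HasDerivAt (fun t : ℝ => (t, θ)) ((1 : ℝ), (0 : ℝ)) s :=
      (hasDerivAt_id s).prodMk (hasDerivAt_const s θ)
    exact ((hwd (s, θ)).hasFDerivAt.comp_hasDerivAt s h1)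
  have hDeq : ∀ s θ, D s θ = fderiv ℝ (Function.uncurry w) (s, θ) (1, 0) :=
    fun s θ => (hDderiv s θ).deriv
  have hDcont : Continuous (Function.uncurry D) := by
    have : Function.uncurry D = fun p : ℝ × ℝ => fderiv ℝ (Function.uncurry w) p (1, 0) := by
      funext p
      exact hDeq p.1 p.2
    rw [this]
    exact (hw.continuous_fderiv one_ne_zero).clm_apply continuous_const
  have hwc : Continuous (Function.uncurry w) := hw.continuous
  -- per-θ estimate
  have key : ∀ θ, c * ρ Y * |w Y θ| ≤
      (∫ s in (0:ℝ)..Y, |w s θ| * ρ s ^ 2) + c * ∫ s in (0:ℝ)..Y, |D s θ| * ρ s := by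
    intro θ
    apply key_oneD k Y c hk0 hY0 harc_lt hsin ρ hρeq hρc
    · intro s
      have := hDderiv s θ
      rwa [← hDeq s θ] at this
    · exact hDcont.comp (continuous_id.prodMk continuous_const)
  -- integrate over θ and swap
  have h2π : (0:ℝ) ≤ 2 * π := by positivity
  have hfc1 : Continuous (Function.uncurry fun s θ => |w s θ| * ρ s ^ 2) :=
    hwc.abs.mul ((hρc.comp continuous_fst).pow 2)
  have hfc2 : Continuous (Function.uncurry fun s θ => |D s θ| * ρ s) :=
    hDcont.abs.mul (hρc.comp continuous_fst)
  have hswap1 : (∫ s in (0:ℝ)..Y, ∫ θ in (0:ℝ)..(2 * π), |w s θ| * ρ s ^ 2)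
      = ∫ θ in (0:ℝ)..(2 * π), ∫ s in (0:ℝ)..Y, |w s θ| * ρ s ^ 2 :=
    swapRect _ hY0 h2π hfc1
  have hswap2 : (∫ s in (0:ℝ)..Y, ∫ θ in (0:ℝ)..(2 * π), |D s θ| * ρ s)
      = ∫ θ in (0:ℝ)..(2 * π), ∫ s in (0:ℝ)..Y, |D s θ| * ρ s :=
    swapRect _ hY0 h2π hfc2
  have hF1c : Continuous fun θ => ∫ s in (0:ℝ)..Y, |w s θ| * ρ s ^ 2 :=
    continuous_parametric_intervalIntegral_of_continuous' (μ := volume)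
      (f := fun θ s => |w s θ| * ρ s ^ 2)
      (by exact (hwc.comp continuous_swap).abs.mul ((hρc.comp continuous_snd).pow 2)) 0 Y
  have hF2c : Continuous fun θ => ∫ s in (0:ℝ)..Y, |D s θ| * ρ s :=
    continuous_parametric_intervalIntegral_of_continuous' (μ := volume)
      (f := fun θ s => |D s θ| * ρ s)
      (by exact (hDcont.comp continuous_swap).abs.mul (hρc.comp continuous_snd)) 0 Y
  have intL : IntervalIntegrable (fun θ => c * ρ Y * |w Y θ|) volume 0 (2 * π) :=
    (continuous_const.mul ((hwc.comp (continuous_const.prodMk continuous_id)).abs)).intervalIntegrable _ _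
  have intF1 : IntervalIntegrable (fun θ => ∫ s in (0:ℝ)..Y, |w s θ| * ρ s ^ 2) volume 0 (2 * π) :=
    hF1c.intervalIntegrable _ _
  have intF2 : IntervalIntegrable
      (fun θ => c * ∫ s in (0:ℝ)..Y, |D s θ| * ρ s) volume 0 (2 * π) :=
    (continuous_const.mul hF2c).intervalIntegrable _ _
  have main : (∫ θ in (0:ℝ)..(2 * π), c * ρ Y * |w Y θ|)
      ≤ ∫ θ in (0:ℝ)..(2 * π),
          ((∫ s in (0:ℝ)..Y, |w s θ| * ρ s ^ 2) + c * ∫ s in (0:ℝ)..Y, |D s θ| * ρ s) :=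
    intervalIntegral.integral_mono_on h2π intL (intF1.add intF2) (fun θ _ => key θ)
  rw [intervalIntegral.integral_const_mul,
    intervalIntegral.integral_add intF1 intF2,
    intervalIntegral.integral_const_mul] at main
  -- convert collarRho to ρ in the goal
  have gY : collarRho ℓ Y = ρ Y := hρcollar Y ⟨hY0, le_refl Y⟩
  have g1 : (∫ s in (0:ℝ)..Y, ∫ θ in (0:ℝ)..(2 * π), |w s θ| * (collarRho ℓ s) ^ 2)
      = ∫ s in (0:ℝ)..Y, ∫ θ in (0:ℝ)..(2 * π), |w s θ| * ρ s ^ 2 := by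
    apply intervalIntegral.integral_congr
    intro s hs
    rw [uIcc_of_le hY0] at hs
    simp only [hρcollar s hs]
  have g2 : (∫ s in (0:ℝ)..Y, ∫ θ in (0:ℝ)..(2 * π), |D s θ| * collarRho ℓ s)
      = ∫ s in (0:ℝ)..Y, ∫ θ in (0:ℝ)..(2 * π), |D s θ| * ρ s := by
    apply intervalIntegral.integral_congr
    intro s hs
    rw [uIcc_of_le hY0] at hs
    simp only [hρcollar s hs]
  rw [gY, g1, g2, hswap1, hswap2]
  exact main
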